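/- Let F^{ijm}_{kln} be string-net F-symbols (indices in a finite set of string types with involution *) satisfying the pentagon equation, the normalization F^{ijk}_{j*i*0} = (v_k/(v_i v_j))δ_{ijk}, tetrahedral symmetry, and the conjugation property F^{i*j*m*}_{k*l*n*} = (F^{ijm}_{kln})*. Then for all fixed i, α, γ, j and all β, β': Σ_{k} (F^{iα*β}_{γjk})* F^{iα*β'}_{γjk} = δ_{β,β'} δ_{iα*β} δ_{jβ*γ}, i.e., F restricted to the fusion-allowed subspace is unitary. -/

import Mathlib

open Finset

/-- Unitarity of string-net F-symbols in the fusion-allowed subspace, derived from the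
pentagon equation, normalization, tetrahedral symmetry and the conjugation property.
Here `F i j m k l n` denotes `F^{ijm}_{kln}`, `st` is the string-type involution `*`,
`z0` is the vacuum string `0`, `δ` the fusion constraints and `v` the square roots of
the quantum dimensions. -/
theorem F_unitary_in_subspace {S : Type} [Fintype S] [DecidableEq S]
    (z0 : S) (st : S → S) (hst : ∀ a, st (st a) = a) (hst0 : st z0 = z0)
    (δ : S → S → S → ℕ) (hδ01 : ∀ i j k, δ i j k ≤ 1)
    (hδsym1 : ∀ i j k, δ i j k = δ j i k)
    (hδsym2 : ∀ i j k, δ i j k = δ i k j)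
    (hδst : ∀ i j k, δ (st i) (st j) (st k) = δ i j k)
    (hδ0 : ∀ i j, δ i j z0 = if j = st i then 1 else 0)
    (v : S → ℂ) (hv : ∀ s, v s ≠ 0) (hv0 : v z0 = 1)
    (F : S → S → S → S → S → S → ℂ)
    -- F-symbols vanish outside the fusion-allowed subspace
    (hsupp : ∀ i j m k l n,
      δ i j m * δ k l (st m) * δ i l n * δ j k (st n) = 0 → F i j m k l n = 0)
    -- pentagon equation
    (hpent : ∀ m l q k p j i s r, ∑ x, F m l q k (st p) x * F j i p m x (st s) *
        F j (st s) x l k r = F j i p (st q) k (st r) * F r i (st q) m l (st s))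
    -- normalization
    (hnorm : ∀ i j k, F i j k (st j) (st i) z0 = (v k / (v i * v j)) * (δ i j k : ℂ))
    -- tetrahedral symmetry
    (htet1 : ∀ i j m k l n, F i j m k l n = F j i m l k (st n))
    (htet2 : ∀ i j m k l n, F i j m k l n = F l k (st m) j i n)
    (htet3 : ∀ i j m k l n,
      F i j m k l n = (v m * v n / (v j * v l)) * F i m j (st k) n l)
    -- conjugation property
    (hconj : ∀ i j m k l n,
      F (st i) (st j) (st m) (st k) (st l) (st n) = (starRingEnd ℂ) (F i j m k l n)) :
    ∀ i α γ j β β',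
      ∑ k, (starRingEnd ℂ) (F i (st α) β γ j k) * F i (st α) β' γ j k =
        (if β = β' then 1 else 0) * (δ i (st α) β : ℂ) * (δ j (st β) γ : ℂ) := by
  -- basic helpers
  have hstinj : ∀ a b : S, st a = st b → a = b := by
    intro a b h
    rw [← hst a, h, hst]
  have hcyc : ∀ a b c, δ a b c = δ b c a := by
    intro a b c
    rw [hδsym1, hδsym2]
  have hδaa : ∀ a, δ a (st a) z0 = 1 := by
    intro a; rw [hδ0]; simp
  have hδ000 : δ z0 z0 z0 = 1 := by
    rw [hδ0, hst0]; simp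
  -- v squared relation : v(a*)^2 = v(a)^2
  have hvsq : ∀ a, v (st a) * v (st a) = v a * v a := by
    intro a
    have e1 := hnorm a z0 (st a)
    have e2 := htet2 a z0 (st a) (st z0) (st a) z0
    have e3 := hnorm (st a) z0 a
    rw [hst0] at e1 e2 e3
    rw [hst] at e2 e3
    rw [e1, e3] at e2
    have d1 : δ a z0 (st a) = 1 := by rw [hδsym2]; exact hδaa a
    have d2 : δ (st a) z0 a = 1 := by rw [hδsym2, hδ0, hst]; simp
    rw [d1, d2, hv0] at e2
    push_cast at e2
    have hva := hv a
    have hvsa := hv (st a)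
    field_simp at e2
    linear_combination e2
  -- value of F with a vacuum leg
  have hT : ∀ i m s, F z0 i (st i) m s (st s) = (v (st s) / v s) * (δ s i m : ℂ) := by
    intro i m s
    have e1 := htet2 z0 i (st i) m s (st s)
    rw [hst] at e1
    have e2 := htet3 s m i i z0 (st s)
    have e3 := hnorm s i m
    rw [e2, e3, hv0] at e1
    rw [e1]
    have := hv s; have := hv i; have := hv m
    field_simp
  -- key identity obtained from the pentagon equation
  have key : ∀ m s q j p i, (∑ x, F m s q (st j) (st p) x * F j p i (st m) (st s) x)
      = (if q = i then (1:ℂ) else 0) * (v (st s) / v s) * (δ j i p : ℂ) * (δ s i m : ℂ) := by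
    intro m s q j p i
    have hp := hpent m s q (st j) p j i s z0
    have stepA : ∀ x, F j (st s) x s (st j) z0
        = (v x / (v j * v (st s))) * (δ j (st s) x : ℂ) := by
      intro x
      have := hnorm j (st s) x
      rwa [hst] at this
    have e5 : ∀ x, F m s q (st j) (st p) x * F j i p m x (st s) * F j (st s) x s (st j) z0
        = (v p / (v i * v j)) * (F m s q (st j) (st p) x * F j p i (st m) (st s) x) := by
      intro x
      rw [htet3 j i p m x (st s), stepA x]
      by_cases hx : δ j (st s) x = 0
      · have h2 : F j p i (st m) (st s) x = 0 := by
          apply hsupp; rw [hx]; simp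
        rw [h2, hx]
        push_cast
        ring
      · have hx1 : (δ j (st s) x : ℂ) = 1 := by
          have h01 := hδ01 j (st s) x
          have : δ j (st s) x = 1 := by omega
          rw [this]; norm_num
        rw [hx1, mul_one]
        have := hv p; have := hv i; have := hv j; have := hv x; have := hv (st s)
        field_simp
    simp only [e5] at hp
    rw [← Finset.mul_sum] at hp
    rw [hst0] at hp
    have hc : (v p / (v i * v j)) ≠ 0 :=
      div_ne_zero (hv p) (mul_ne_zero (hv i) (hv j))
    by_cases hq : q = i
    · subst hq
      rw [hnorm j q p, hT q m s] at hp
      rw [if_pos rfl]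
      apply mul_left_cancel₀ hc
      rw [hp]
      ring
    · have h0 : F j i p (st q) (st j) z0 = 0 := by
        apply hsupp
        have hz : δ i (st q) (st z0) = 0 := by
          rw [hst0, hδ0]
          exact if_neg (fun h => hq (hstinj _ _ h))
        rw [hz, mul_zero]
      rw [h0, zero_mul] at hp
      rw [if_neg hq]
      have hS : (∑ x, F m s q (st j) (st p) x * F j p i (st m) (st s) x) = 0 :=
        (mul_eq_zero.mp hp).resolve_left hc
      rw [hS]
      ring
  -- main identity, still with a possible sign
  have M : ∀ I A Γ J b b', (∑ k, (starRingEnd ℂ) (F I (st A) b Γ J k) * F I (st A) b' Γ J k)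
      = (if st b = st b' then (1:ℂ) else 0) * (v (st A) / v A)
        * (δ Γ (st b') J : ℂ) * (δ A (st b') (st I) : ℂ) := by
    intro I A Γ J b b'
    have hk := key (st I) A (st b) Γ J (st b')
    simp only [hst] at hk
    rw [← hk]
    refine Fintype.sum_bijective st (Function.Involutive.bijective hst) _ _ ?_
    intro k
    have c1 := hconj I (st A) b Γ J k
    rw [hst] at c1
    have c2 : F I (st A) b' Γ J k = F Γ J (st b') I (st A) (st k) := by
      rw [htet1 I (st A) b' Γ J k, htet2 (st A) I b' J Γ (st k)]
    rw [← c1, c2]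
  -- v is invariant under the involution
  have hvst : ∀ a, v (st a) = v a := by
    intro a
    have M0 := M a a z0 z0 z0 z0
    have d1 : δ z0 (st z0) z0 = 1 := by rw [hst0]; exact hδ000
    have d2 : δ a (st z0) (st a) = 1 := by
      rw [hst0, hδsym2]; exact hδaa a
    rw [d1, d2, if_pos rfl] at M0
    push_cast at M0
    rw [one_mul, mul_one, mul_one] at M0
    have hre : (∑ k, (starRingEnd ℂ) (F a (st a) z0 z0 z0 k) * F a (st a) z0 z0 z0 k)
        = ((∑ k, Complex.normSq (F a (st a) z0 z0 z0 k) : ℝ) : ℂ) := by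
      push_cast
      refine Finset.sum_congr rfl ?_
      intro k _
      rw [Complex.normSq_eq_conj_mul_self]
    set r : ℝ := ∑ k, Complex.normSq (F a (st a) z0 z0 z0 k) with hr
    have hrv : (r : ℂ) = v (st a) / v a := by rw [← hre, M0]
    have hrsq : r ^ 2 = 1 := by
      have : ((r : ℂ)) ^ 2 = 1 := by
        rw [hrv, div_pow]
        rw [div_eq_one_iff_eq (pow_ne_zero 2 (hv a))]
        ring_nf
        linear_combination hvsq a
      exact_mod_cast this
    have hrpos : 0 ≤ r := by
      apply Finset.sum_nonneg
      intro k _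
      exact Complex.normSq_nonneg _
    have hr1 : r = 1 := by
      have h := hrsq
      nlinarith [sq_nonneg (r - 1), sq_nonneg (r + 1)]
    have h1 : (v (st a) / v a) = 1 := by rw [← hrv, hr1]; norm_num
    exact (div_eq_one_iff_eq (hv a)).mp h1
  -- finish
  intro i α γ j β β'
  have hM := M i α γ j β β'
  rw [hvst α, div_self (hv α), mul_one] at hM
  rw [hM]
  by_cases hb : β = β'
  · subst hb
    rw [if_pos rfl, if_pos rfl]
    have d1 : δ γ (st β) j = δ j (st β) γ := by
      rw [hδsym1, hδsym2, hδsym1]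
    have d2 : (δ α (st β) (st i)) = δ i (st α) β := by
      have h1 : δ α (st β) (st i) = δ (st α) β i := by
        have := hδst (st α) β i
        rw [hst] at this
        exact this
      rw [h1, hcyc, hcyc]
    rw [d1, d2]
    ring
  · have hb' : ¬ st β = st β' := fun h => hb (hstinj _ _ h)
    rw [if_neg hb', if_neg hb]
    ring
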